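/- arXiv:2201.07628 — 3 statements merged into one kernel-verified Lean document; each statement's English description precedes it below -/
import Mathlib

section
/- Let Q be a discrete probability measure on ℝ^d whose support contains at most k points, and let H_1, …, H_{k+1} be linear subspaces of ℝ^d such that H_i^⊥ ∩ H_j^⊥ = {0} whenever i ≠ j. Then for every Borel probability measure P on ℝ^d and every point x ∈ ℝ^d, P({x}) − Q({x}) ≤ max over 1 ≤ j ≤ k+1 of (P_{H_j}({π_{H_j}(x)}) − Q_{H_j}({π_{H_j}(x)})). -/
open MeasureTheory

/-- Total variation distance between two measures. -/
noncomputable def dTV {α : Type*} [MeasurableSpace α] (P Q : Measure α) : ℝ :=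
  ⨆ A : {A : Set α // MeasurableSet A}, |(P A).toReal - (Q A).toReal|

/-- The projection of a measure `P` on `ℝ^d` onto a subspace `H`:
the pushforward of `P` under the orthogonal projection onto `H`. -/
noncomputable def projMeasure {d : ℕ} (H : Submodule ℝ (EuclideanSpace ℝ (Fin d)))
    (P : Measure (EuclideanSpace ℝ (Fin d))) : Measure H :=
  P.map (H.orthogonalProjectionOnto)

theorem stmt1 {d k : ℕ} (P Q : Measure (EuclideanSpace ℝ (Fin d)))
    [IsProbabilityMeasure P] [IsProbabilityMeasure Q]
    (S : Finset (EuclideanSpace ℝ (Fin d))) (hScard : S.card ≤ k)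
    (hQS : Q (↑S : Set (EuclideanSpace ℝ (Fin d)))ᶜ = 0)
    (H : Fin (k + 1) → Submodule ℝ (EuclideanSpace ℝ (Fin d)))
    (hH : ∀ i j, i ≠ j → (H i)ᗮ ⊓ (H j)ᗮ = ⊥)
    (x : EuclideanSpace ℝ (Fin d)) :
    (P {x}).toReal - (Q {x}).toReal ≤
      ⨆ j : Fin (k + 1),
        ((projMeasure (H j) P) {(H j).orthogonalProjectionOnto x}).toReal -
          ((projMeasure (H j) Q) {(H j).orthogonalProjectionOnto x}).toReal := by
  -- the fiber over π_{H j} x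
  set F : Fin (k + 1) → Set (EuclideanSpace ℝ (Fin d)) :=
    fun j => ((H j).orthogonalProjectionOnto) ⁻¹' {(H j).orthogonalProjectionOnto x} with hF
  have hmemF : ∀ j y, y ∈ F j ↔ y - x ∈ (H j)ᗮ := by
    intro j y
    simp only [hF, Set.mem_preimage, Set.mem_singleton_iff]
    rw [← Submodule.orthogonalProjectionOnto_eq_zero_iff, map_sub, sub_eq_zero]
  -- pigeonhole: some fiber meets S only possibly at x
  have hpigeon : ∃ j, ∀ s ∈ S, s ∈ F j → s = x := by
    by_contra hcon
    push_neg at hcon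
    choose f hfS hfF hfx using hcon
    have hinj : Function.Injective f := by
      intro i j hij
      by_contra hne
      have h1 : f i - x ∈ (H i)ᗮ := (hmemF i (f i)).1 (hfF i)
      have h2 : f i - x ∈ (H j)ᗮ := hij ▸ (hmemF j (f j)).1 (hfF j)
      have : f i - x ∈ (H i)ᗮ ⊓ (H j)ᗮ := ⟨h1, h2⟩
      rw [hH i j hne] at this
      exact hfx i (by simpa [sub_eq_zero] using this)
    have := Finset.card_le_card_of_injOn f (fun i _ => hfS i)
      (Set.injOn_of_injective hinj) (s := Finset.univ)
    simp at this
    omega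
  obtain ⟨j, hj⟩ := hpigeon
  -- measurability
  have hmeas : Measurable ((H j).orthogonalProjectionOnto) :=
    ((H j).orthogonalProjectionOnto).continuous.measurable
  have hFmeas : MeasurableSet (F j) := hmeas (measurableSet_singleton _)
  have hPmap : (projMeasure (H j) P) {(H j).orthogonalProjectionOnto x} = P (F j) := by
    rw [projMeasure, Measure.map_apply hmeas (measurableSet_singleton _)]
  have hQmap : (projMeasure (H j) Q) {(H j).orthogonalProjectionOnto x} = Q (F j) := by
    rw [projMeasure, Measure.map_apply hmeas (measurableSet_singleton _)]
  -- P {x} ≤ P (F j)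
  have hxF : x ∈ F j := by rw [hmemF]; simp
  have hP : P {x} ≤ P (F j) := measure_mono (by simpa using hxF)
  -- Q (F j) ≤ Q {x}
  have hQ : Q (F j) ≤ Q {x} := by
    have hsub : F j ⊆ {x} ∪ (↑S : Set (EuclideanSpace ℝ (Fin d)))ᶜ := by
      intro y hy
      by_cases hyS : y ∈ (↑S : Set (EuclideanSpace ℝ (Fin d)))
      · exact Or.inl (hj y hyS hy)
      · exact Or.inr hyS
    calc Q (F j) ≤ Q ({x} ∪ (↑S : Set (EuclideanSpace ℝ (Fin d)))ᶜ) := measure_mono hsub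
      _ ≤ Q {x} + Q (↑S : Set (EuclideanSpace ℝ (Fin d)))ᶜ := measure_union_le _ _
      _ = Q {x} := by rw [hQS, add_zero]
  have hle : (P {x}).toReal - (Q {x}).toReal ≤
      ((projMeasure (H j) P) {(H j).orthogonalProjectionOnto x}).toReal -
        ((projMeasure (H j) Q) {(H j).orthogonalProjectionOnto x}).toReal := by
    rw [hPmap, hQmap]
    have h1 : (P {x}).toReal ≤ (P (F j)).toReal :=
      ENNReal.toReal_mono (measure_ne_top _ _) hP
    have h2 : (Q (F j)).toReal ≤ (Q {x}).toReal :=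
      ENNReal.toReal_mono (measure_ne_top _ _) hQ
    linarith
  exact hle.trans (le_ciSup (f := fun j : Fin (k+1) =>
    ((projMeasure (H j) P) {(H j).orthogonalProjectionOnto x}).toReal -
      ((projMeasure (H j) Q) {(H j).orthogonalProjectionOnto x}).toReal)
    (Set.Finite.bddAbove (Set.finite_range _)) j)
end

section
/- Quantitative Heppes theorem: Let Q be a discrete probability measure on ℝ^d whose support contains at most k points, and let H_1, …, H_{k+1} be linear subspaces of ℝ^d such that H_i^⊥ ∩ H_j^⊥ = {0} for i ≠ j. Then for every Borel probability measure P on ℝ^d, d_TV(P,Q) ≤ Σ_{j=1}^{k+1} d_TV(P_{H_j}, Q_{H_j}). -/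
open MeasureTheory

lemma meas_finset {α : Type*} [MeasurableSpace α] [MeasurableSingletonClass α]
    (μ : Measure α) (T : Finset α) : μ ↑T = ∑ x ∈ T, μ {x} := by
  rw [← measure_biUnion_finset (f := fun x => ({x} : Set α))
    (fun a _ b _ hab => by simp [Set.disjoint_singleton, hab])
    (fun x _ => measurableSet_singleton x)]
  congr 1
  ext y; simp

lemma meas_finset_real {α : Type*} [MeasurableSpace α] [MeasurableSingletonClass α]
    (μ : Measure α) [IsFiniteMeasure μ] (T : Finset α) :
    (μ ↑T).toReal = ∑ x ∈ T, (μ {x}).toReal := by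
  rw [meas_finset, ENNReal.toReal_sum (fun a _ => measure_ne_top μ _)]

lemma dTV_bddAbove {α : Type*} [MeasurableSpace α] (P Q : Measure α)
    [IsProbabilityMeasure P] [IsProbabilityMeasure Q] :
    BddAbove (Set.range fun A : {A : Set α // MeasurableSet A} =>
      |(P A).toReal - (Q A).toReal|) := by
  refine ⟨1, ?_⟩
  rintro x ⟨A, rfl⟩
  have h1 : (P (A : Set α)).toReal ≤ 1 := by
    have := prob_le_one (μ := P) (s := (A : Set α))
    simpa using ENNReal.toReal_mono (by simp) this
  have h2 : (Q (A : Set α)).toReal ≤ 1 := by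
    have := prob_le_one (μ := Q) (s := (A : Set α))
    simpa using ENNReal.toReal_mono (by simp) this
  have h3 : (0:ℝ) ≤ (P (A : Set α)).toReal := ENNReal.toReal_nonneg
  have h4 : (0:ℝ) ≤ (Q (A : Set α)).toReal := ENNReal.toReal_nonneg
  rw [abs_le]; constructor <;> linarith

lemma le_dTV {α : Type*} [MeasurableSpace α] (P Q : Measure α)
    [IsProbabilityMeasure P] [IsProbabilityMeasure Q] {B : Set α} (hB : MeasurableSet B) :
    (P B).toReal - (Q B).toReal ≤ dTV P Q :=
  le_trans (le_abs_self _) (le_ciSup (dTV_bddAbove P Q) ⟨B, hB⟩)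

/-- Quantitative Heppes theorem. -/
theorem stmt2 {d k : ℕ} (P Q : Measure (EuclideanSpace ℝ (Fin d)))
    [IsProbabilityMeasure P] [IsProbabilityMeasure Q]
    (S : Finset (EuclideanSpace ℝ (Fin d))) (hScard : S.card ≤ k)
    (hQS : Q (↑S : Set (EuclideanSpace ℝ (Fin d)))ᶜ = 0)
    (H : Fin (k + 1) → Submodule ℝ (EuclideanSpace ℝ (Fin d)))
    (hH : ∀ i j, i ≠ j → (H i)ᗮ ⊓ (H j)ᗮ = ⊥) :
    dTV P Q ≤ ∑ j : Fin (k + 1), dTV (projMeasure (H j) P) (projMeasure (H j) Q) := by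
  classical
  set φ : ∀ j : Fin (k+1), EuclideanSpace ℝ (Fin d) → H j := fun j x => (H j).orthogonalProjectionOnto x with hφ
  have hproj : ∀ (j : Fin (k+1)) (x y : EuclideanSpace ℝ (Fin d)), φ j x = φ j y ↔ x - y ∈ (H j)ᗮ := by
    intro j x y
    rw [hφ]
    simp only
    rw [← sub_eq_zero, ← map_sub, Submodule.orthogonalProjectionOnto_eq_zero_iff]
  have hφm : ∀ j, Measurable (φ j) := fun j => ((H j).orthogonalProjectionOnto).continuous.measurable
  -- injectivity trick
  have key : ∀ (w : EuclideanSpace ℝ (Fin d)) (g : Fin (k+1) → EuclideanSpace ℝ (Fin d)), (∀ j, g j ∈ S) → (∀ j, φ j (g j) = φ j w) →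
      Function.Injective g ∨ ∃ i, g i = w := by
    intro w g hgS hgeq
    by_cases hinj : Function.Injective g
    · exact Or.inl hinj
    · right
      simp only [Function.Injective, not_forall] at hinj
      obtain ⟨i, j, hgij, hij⟩ := hinj
      have h1 : g i - w ∈ (H i)ᗮ := (hproj i _ _).1 (hgeq i)
      have h2 : g i - w ∈ (H j)ᗮ := by rw [hgij]; exact (hproj j _ _).1 (hgeq j)
      have h3 : g i - w ∈ (H i)ᗮ ⊓ (H j)ᗮ := Submodule.mem_inf.mpr ⟨h1, h2⟩
      rw [hH i j hij] at h3
      exact ⟨i, by simpa [sub_eq_zero] using h3⟩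
  -- separation of points of S
  have hsep : ∀ x ∈ S, ∃ j, ∀ y ∈ S, y ≠ x → φ j y ≠ φ j x := by
    intro x hx
    by_contra hc
    push_neg at hc
    choose g hgS hgne hgeq using hc
    have hmaps : ∀ j : Fin (k+1), g j ∈ S.erase x :=
      fun j => Finset.mem_erase.mpr ⟨hgne j, hgS j⟩
    have hinj : Function.Injective g := by
      rcases key x g hgS hgeq with h | ⟨i, hi⟩
      · exact h
      · exact absurd hi (hgne i)
    have hcard := Finset.card_le_card_of_injOn (s := Finset.univ) g (fun j _ => hmaps j)
      (fun a _ b _ hab => hinj hab)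
    have h1 : (S.erase x).card < S.card := Finset.card_erase_lt_of_mem hx
    simp [Finset.card_univ] at hcard
    omega
  -- avoidance for points outside S
  have havoid : ∀ w : EuclideanSpace ℝ (Fin d), w ∉ (↑S : Set (EuclideanSpace ℝ (Fin d))) → ∃ j, ∀ y ∈ S, φ j y ≠ φ j w := by
    intro w hw
    by_contra hc
    push_neg at hc
    choose g hgS hgeq using hc
    have hinj : Function.Injective g := by
      rcases key w g hgS hgeq with h | ⟨i, hi⟩
      · exact h
      · exact absurd (hi ▸ hgS i) (by simpa using hw)
    have hcard := Finset.card_le_card_of_injOn (s := Finset.univ) g (fun j _ => hgS j)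
      (fun a _ b _ hab => hinj hab)
    simp [Finset.card_univ] at hcard
    omega
  choose! jf hjf using hsep
  set pt : EuclideanSpace ℝ (Fin d) → ℝ := fun x => (P {x}).toReal with hpt
  set qt : EuclideanSpace ℝ (Fin d) → ℝ := fun x => (Q {x}).toReal with hqt
  set S' : Finset (EuclideanSpace ℝ (Fin d)) := S.filter (fun x => qt x < pt x) with hS'
  set Ej : Fin (k+1) → Finset (EuclideanSpace ℝ (Fin d)) :=
    fun j => S'.filter (fun x => jf x = j) with hEj
  set U : Fin (k+1) → Set (EuclideanSpace ℝ (Fin d)) :=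
    fun j => φ j ⁻¹' ((φ j '' ↑S)ᶜ) with hU
  set R : ℝ := (P (↑S : Set (EuclideanSpace ℝ (Fin d)))ᶜ).toReal + ∑ x ∈ S', (pt x - qt x)
    with hR
  have hSm : MeasurableSet (↑S : Set (EuclideanSpace ℝ (Fin d))) := S.finite_toSet.measurableSet
  have hQS1 : Q (↑S : Set (EuclideanSpace ℝ (Fin d))) = 1 := by
    have h := measure_add_measure_compl (μ := Q) hSm
    rw [hQS, add_zero, measure_univ] at h
    exact h
  have hPS : (P (↑S : Set (EuclideanSpace ℝ (Fin d)))ᶜ).toReal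
      = 1 - (P (↑S : Set (EuclideanSpace ℝ (Fin d)))).toReal := by
    have h := measure_add_measure_compl (μ := P) hSm
    have h2 := congrArg ENNReal.toReal h
    rw [ENNReal.toReal_add (measure_ne_top _ _) (measure_ne_top _ _), measure_univ] at h2
    simp at h2
    linarith
  have qsum : ∑ x ∈ S, qt x = 1 := by
    rw [hqt, ← meas_finset_real Q S, hQS1, ENNReal.toReal_one]
  have psum : ∑ x ∈ S, pt x = (P (↑S : Set (EuclideanSpace ℝ (Fin d)))).toReal :=
    (meas_finset_real P S).symm
  have hmax1 : ∑ x ∈ S, max (pt x - qt x) 0 = ∑ x ∈ S', (pt x - qt x) := by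
    rw [hS', Finset.sum_filter]
    refine Finset.sum_congr rfl (fun x _ => ?_)
    split_ifs with h
    · exact max_eq_left (by linarith)
    · exact max_eq_right (by push_neg at h; linarith)
  -- Part I : dTV P Q ≤ R
  have hR1 : dTV P Q ≤ R := by
    apply ciSup_le
    rintro ⟨A, hA⟩
    set T : Finset (EuclideanSpace ℝ (Fin d)) := S.filter (fun x => x ∈ A) with hT
    have hTS : (↑T : Set (EuclideanSpace ℝ (Fin d))) = ↑S ∩ A := by
      ext y; simp [hT, Finset.mem_filter]
    have hTsub : (↑T : Set (EuclideanSpace ℝ (Fin d))) ⊆ A := by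
      rw [hTS]; exact Set.inter_subset_right
    have hsubSA : A ⊆ (↑S ∩ A) ∪ (↑S : Set (EuclideanSpace ℝ (Fin d)))ᶜ := by
      intro y hy
      by_cases h : y ∈ (↑S : Set (EuclideanSpace ℝ (Fin d)))
      · exact Or.inl ⟨h, hy⟩
      · exact Or.inr h
    have hPA_le : (P A).toReal ≤ ∑ x ∈ T, pt x
        + (P (↑S : Set (EuclideanSpace ℝ (Fin d)))ᶜ).toReal := by
      have h1 : P A ≤ P ↑T + P (↑S : Set (EuclideanSpace ℝ (Fin d)))ᶜ := by
        calc P A ≤ P ((↑S ∩ A) ∪ (↑S : Set (EuclideanSpace ℝ (Fin d)))ᶜ) := measure_mono hsubSA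
          _ ≤ P (↑S ∩ A) + P (↑S : Set (EuclideanSpace ℝ (Fin d)))ᶜ := measure_union_le _ _
          _ = _ := by rw [hTS]
      have h2 := ENNReal.toReal_mono
        (by exact ENNReal.add_ne_top.mpr ⟨measure_ne_top _ _, measure_ne_top _ _⟩) h1
      rw [ENNReal.toReal_add (measure_ne_top _ _) (measure_ne_top _ _),
        meas_finset_real] at h2
      exact h2
    have hPA_ge : ∑ x ∈ T, pt x ≤ (P A).toReal := by
      rw [hpt, ← meas_finset_real]
      exact ENNReal.toReal_mono (measure_ne_top _ _) (measure_mono hTsub)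
    have hQA_le : (Q A).toReal ≤ ∑ x ∈ T, qt x := by
      have h1 : Q A ≤ Q ↑T := by
        calc Q A ≤ Q (↑S ∩ A) + Q (↑S : Set (EuclideanSpace ℝ (Fin d)))ᶜ :=
              le_trans (measure_mono hsubSA) (measure_union_le _ _)
          _ = Q ↑T := by rw [hQS, add_zero, hTS]
      have h2 := ENNReal.toReal_mono (measure_ne_top _ _) h1
      rwa [meas_finset_real] at h2
    have hQA_ge : ∑ x ∈ T, qt x ≤ (Q A).toReal := by
      rw [hqt, ← meas_finset_real]
      exact ENNReal.toReal_mono (measure_ne_top _ _) (measure_mono hTsub)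
    have hsubT : T ⊆ S := Finset.filter_subset _ _
    have hs1 : ∑ x ∈ T, (pt x - qt x) ≤ ∑ x ∈ S', (pt x - qt x) := by
      calc ∑ x ∈ T, (pt x - qt x) ≤ ∑ x ∈ T, max (pt x - qt x) 0 :=
            Finset.sum_le_sum (fun i _ => le_max_left _ _)
        _ ≤ ∑ x ∈ S, max (pt x - qt x) 0 :=
            Finset.sum_le_sum_of_subset_of_nonneg hsubT (fun i _ _ => le_max_right _ _)
        _ = _ := hmax1
    have hs2 : ∑ x ∈ T, (qt x - pt x) ≤ ∑ x ∈ S, max (qt x - pt x) 0 := by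
      calc ∑ x ∈ T, (qt x - pt x) ≤ ∑ x ∈ T, max (qt x - pt x) 0 :=
            Finset.sum_le_sum (fun i _ => le_max_left _ _)
        _ ≤ ∑ x ∈ S, max (qt x - pt x) 0 :=
            Finset.sum_le_sum_of_subset_of_nonneg hsubT (fun i _ _ => le_max_right _ _)
    have hmax2 : ∑ x ∈ S, max (qt x - pt x) 0
        = ∑ x ∈ S, max (pt x - qt x) 0 + ∑ x ∈ S, (qt x - pt x) := by
      rw [← Finset.sum_add_distrib]
      refine Finset.sum_congr rfl (fun x _ => ?_)
      rcases le_total (pt x) (qt x) with h | h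
      · rw [max_eq_left (by linarith), max_eq_right (by linarith)]; ring
      · rw [max_eq_right (by linarith), max_eq_left (by linarith)]; ring
    have hsum_qp : ∑ x ∈ S, (qt x - pt x)
        = 1 - (P (↑S : Set (EuclideanSpace ℝ (Fin d)))).toReal := by
      rw [Finset.sum_sub_distrib, qsum, psum]
    rw [abs_sub_le_iff]
    constructor
    · have hTsum : ∑ x ∈ T, (pt x - qt x) = ∑ x ∈ T, pt x - ∑ x ∈ T, qt x :=
        Finset.sum_sub_distrib _ _
      rw [hR]; linarith
    · have hTsum : ∑ x ∈ T, (qt x - pt x) = ∑ x ∈ T, qt x - ∑ x ∈ T, pt x :=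
        Finset.sum_sub_distrib _ _
      rw [hR]; linarith
  -- Part II : R ≤ sum of projected dTVs
  have hinstP : ∀ j, IsProbabilityMeasure (projMeasure (H j) P) :=
    fun j => Measure.isProbabilityMeasure_map (hφm j).aemeasurable
  have hinstQ : ∀ j, IsProbabilityMeasure (projMeasure (H j) Q) :=
    fun j => Measure.isProbabilityMeasure_map (hφm j).aemeasurable
  have hEsubS : ∀ j, ∀ x ∈ Ej j, x ∈ S := by
    intro j x hx
    exact Finset.mem_of_mem_filter _ (Finset.mem_of_mem_filter _ hx)
  have hj : ∀ j, (P (U j)).toReal + ∑ x ∈ Ej j, (pt x - qt x)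
      ≤ dTV (projMeasure (H j) P) (projMeasure (H j) Q) := by
    intro j
    haveI := hinstP j; haveI := hinstQ j
    set B : Set (H j) := (φ j '' ↑S)ᶜ ∪ φ j '' ↑(Ej j) with hBdef
    have hBm : MeasurableSet B :=
      ((S.finite_toSet.image (φ j)).measurableSet.compl).union
        (((Ej j).finite_toSet.image (φ j)).measurableSet)
    have hmapP : projMeasure (H j) P B = P (φ j ⁻¹' B) := Measure.map_apply (hφm j) hBm
    have hmapQ : projMeasure (H j) Q B = Q (φ j ⁻¹' B) := Measure.map_apply (hφm j) hBm
    have hkey : (φ j ⁻¹' B) ∩ ↑S = (↑(Ej j) : Set (EuclideanSpace ℝ (Fin d))) := by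
      ext y
      constructor
      · rintro ⟨hyB, hyS⟩
        rcases hyB with h | ⟨x, hxE, hxy⟩
        · exact absurd (Set.mem_image_of_mem _ hyS) h
        · have hxEj : x ∈ Ej j := hxE
          have hxS' : x ∈ S' := Finset.mem_of_mem_filter _ hxEj
          have hxS : x ∈ S := Finset.mem_of_mem_filter _ hxS'
          have hjfx : jf x = j := (Finset.mem_filter.mp hxEj).2
          by_cases hyx : y = x
          · rw [hyx]; exact hxE
          · exact absurd (by rw [hjfx]; exact hxy.symm)
              (hjf x hxS y hyS hyx)
      · intro hy
        exact ⟨Or.inr ⟨y, hy, rfl⟩, hEsubS j y hy⟩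
    have hQB : Q (φ j ⁻¹' B) ≤ Q ↑(Ej j) := by
      have hsub2 : φ j ⁻¹' B ⊆ ((φ j ⁻¹' B) ∩ ↑S)
          ∪ (↑S : Set (EuclideanSpace ℝ (Fin d)))ᶜ := by
        intro y hy
        by_cases h : y ∈ (↑S : Set (EuclideanSpace ℝ (Fin d)))
        · exact Or.inl ⟨hy, h⟩
        · exact Or.inr h
      calc Q (φ j ⁻¹' B) ≤ Q ((φ j ⁻¹' B) ∩ ↑S)
            + Q (↑S : Set (EuclideanSpace ℝ (Fin d)))ᶜ :=
            le_trans (measure_mono hsub2) (measure_union_le _ _)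
        _ = Q ↑(Ej j) := by rw [hQS, add_zero, hkey]
    have hUB : U j ⊆ φ j ⁻¹' B := fun w hw => Or.inl hw
    have hEB : (↑(Ej j) : Set (EuclideanSpace ℝ (Fin d))) ⊆ φ j ⁻¹' B :=
      fun x hx => Or.inr ⟨x, hx, rfl⟩
    have hdisj : Disjoint (U j) (↑(Ej j) : Set (EuclideanSpace ℝ (Fin d))) := by
      rw [Set.disjoint_left]
      intro w hwU hwE
      exact hwU (Set.mem_image_of_mem _ (by exact hEsubS j w hwE))
    have hPB : P (U j) + P ↑(Ej j) ≤ P (φ j ⁻¹' B) := by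
      rw [← measure_union hdisj ((Ej j).finite_toSet.measurableSet)]
      exact measure_mono (Set.union_subset hUB hEB)
    have h1 : (P (φ j ⁻¹' B)).toReal - (Q (φ j ⁻¹' B)).toReal
        ≤ dTV (projMeasure (H j) P) (projMeasure (H j) Q) := by
      rw [← hmapP, ← hmapQ]
      exact le_dTV _ _ hBm
    have h2 : (P (U j)).toReal + ∑ x ∈ Ej j, pt x ≤ (P (φ j ⁻¹' B)).toReal := by
      have := ENNReal.toReal_mono (measure_ne_top _ _) hPB
      rwa [ENNReal.toReal_add (measure_ne_top _ _) (measure_ne_top _ _),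
        meas_finset_real] at this
    have h3 : (Q (φ j ⁻¹' B)).toReal ≤ ∑ x ∈ Ej j, qt x := by
      have := ENNReal.toReal_mono (measure_ne_top _ _) hQB
      rwa [meas_finset_real] at this
    have h4 : ∑ x ∈ Ej j, (pt x - qt x) = ∑ x ∈ Ej j, pt x - ∑ x ∈ Ej j, qt x :=
      Finset.sum_sub_distrib _ _
    linarith
  have hUsum : (P (↑S : Set (EuclideanSpace ℝ (Fin d)))ᶜ).toReal
      ≤ ∑ j, (P (U j)).toReal := by
    have hcover : (↑S : Set (EuclideanSpace ℝ (Fin d)))ᶜ ⊆ ⋃ j, U j := by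
      intro w hw
      obtain ⟨j, hj'⟩ := havoid w hw
      refine Set.mem_iUnion.mpr ⟨j, fun hmem => ?_⟩
      obtain ⟨y, hyS, hyw⟩ := hmem
      exact hj' y hyS hyw
    have h1 : P (↑S : Set (EuclideanSpace ℝ (Fin d)))ᶜ ≤ ∑ j, P (U j) :=
      le_trans (measure_mono hcover) (measure_iUnion_fintype_le _ _)
    have h2 := ENNReal.toReal_mono
      (by exact (ENNReal.sum_lt_top.mpr (fun j _ => measure_lt_top _ _)).ne) h1
    rwa [ENNReal.toReal_sum (fun j _ => measure_ne_top _ _)] at h2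
  have hfib : ∑ j, ∑ x ∈ Ej j, (pt x - qt x) = ∑ x ∈ S', (pt x - qt x) :=
    Finset.sum_fiberwise S' jf _
  have hR2 : R ≤ ∑ j : Fin (k + 1), dTV (projMeasure (H j) P) (projMeasure (H j) Q) := by
    calc R = (P (↑S : Set (EuclideanSpace ℝ (Fin d)))ᶜ).toReal
          + ∑ x ∈ S', (pt x - qt x) := hR
      _ ≤ ∑ j, (P (U j)).toReal + ∑ j, ∑ x ∈ Ej j, (pt x - qt x) := by
          rw [hfib]; linarith
      _ = ∑ j, ((P (U j)).toReal + ∑ x ∈ Ej j, (pt x - qt x)) :=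
          Finset.sum_add_distrib.symm
      _ ≤ _ := Finset.sum_le_sum (fun j _ => hj j)
  exact le_trans hR1 hR2
end

section
/- Let P be a probability measure on ℝ^d, Q a discrete probability measure on ℝ^d with support of at most k points, and H_1, …, H_{k+1} subspaces with H_i^⊥ ∩ H_j^⊥ = {0} for i ≠ j. Define A_j to be the set of x ∈ ℝ^d such that (x + H_j^⊥) \ {x} is disjoint from the support of Q. Then the A_j cover ℝ^d, and for any Borel set B_j ⊆ A_j one has Q(B_j + H_j^⊥) = Q(B_j), where B_j + H_j^⊥ = ∪_{x∈B_j}(x + H_j^⊥). -/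
open MeasureTheory Pointwise

theorem stmt13 {d k : ℕ} (P Q : Measure (EuclideanSpace ℝ (Fin d)))
    [IsProbabilityMeasure P] [IsProbabilityMeasure Q]
    (S : Finset (EuclideanSpace ℝ (Fin d))) (hScard : S.card ≤ k)
    (hQS : Q (↑S : Set (EuclideanSpace ℝ (Fin d)))ᶜ = 0)
    (H : Fin (k + 1) → Submodule ℝ (EuclideanSpace ℝ (Fin d)))
    (hH : ∀ i j, i ≠ j → (H i)ᗮ ⊓ (H j)ᗮ = ⊥)
    (A : Fin (k + 1) → Set (EuclideanSpace ℝ (Fin d)))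
    (hA : ∀ j, A j = {x | Disjoint
      (((x + ·) '' ((H j)ᗮ : Set (EuclideanSpace ℝ (Fin d)))) \ {x})
      (↑S : Set (EuclideanSpace ℝ (Fin d)))}) :
    (⋃ j, A j) = Set.univ ∧
      ∀ j, ∀ B : Set (EuclideanSpace ℝ (Fin d)), MeasurableSet B → B ⊆ A j →
        Q (B + ((H j)ᗮ : Set (EuclideanSpace ℝ (Fin d)))) = Q B := by
  constructor
  · ext x
    simp only [Set.mem_iUnion, Set.mem_univ, iff_true]
    by_contra hx
    push_neg at hx
    have h1 : ∀ j, ∃ s, s ∈ (↑S : Set (EuclideanSpace ℝ (Fin d))) ∧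
        s ∈ ((x + ·) '' ((H j)ᗮ : Set (EuclideanSpace ℝ (Fin d)))) \ {x} := by
      intro j
      have hj := hx j
      rw [hA j] at hj
      simp only [Set.mem_setOf_eq, Set.not_disjoint_iff] at hj
      obtain ⟨s, hs1, hs2⟩ := hj
      exact ⟨s, hs2, hs1⟩
    choose f hfS hf using h1
    have hsub : ∀ j, f j - x ∈ (H j)ᗮ := by
      intro j
      obtain ⟨v, hv, hvx⟩ := (hf j).1
      simpa [← hvx] using hv
    have hne : ∀ j, f j ≠ x := fun j => (hf j).2
    have hinj : ∀ i j : Fin (k+1), f i = f j → i = j := by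
      intro i j hij
      by_contra hnij
      have : f i - x ∈ (H i)ᗮ ⊓ (H j)ᗮ := ⟨hsub i, hij ▸ hsub j⟩
      rw [hH i j hnij] at this
      have : f i = x := by
        have h0 : f i - x = 0 := this
        have := sub_eq_zero.mp h0
        exact this
      exact hne i this
    have hcard : k + 1 ≤ S.card := by
      have := Finset.card_le_card_of_injOn (s := Finset.univ) f
        (fun j _ => by exact_mod_cast hfS j)
        (fun i _ j _ h => hinj i j h)
      simpa using this
    omega
  · intro j B hB hBA
    set V : Set (EuclideanSpace ℝ (Fin d)) := ((H j)ᗮ : Set (EuclideanSpace ℝ (Fin d)))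
    have h0 : (0 : EuclideanSpace ℝ (Fin d)) ∈ V := Submodule.zero_mem _
    have hsub : B ⊆ B + V := fun b hb => ⟨b, hb, 0, h0, add_zero b⟩
    have hkey : (B + V) ∩ (↑S : Set (EuclideanSpace ℝ (Fin d))) ⊆ B := by
      rintro s ⟨⟨b, hb, v, hv, rfl⟩, hsS⟩
      by_cases hv0 : v = 0
      · simpa [hv0] using hb
      · exfalso
        have hbA := hBA hb
        rw [hA j] at hbA
        have hmem : b + v ∈ ((b + ·) '' V) \ {b} := by
          refine ⟨⟨v, hv, rfl⟩, ?_⟩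
          simp only [Set.mem_singleton_iff]
          intro h
          exact hv0 (by simpa using h)
        exact Set.disjoint_left.mp hbA hmem hsS
    have hdiff : Q ((B + V) \ B) = 0 := by
      refine measure_mono_null ?_ hQS
      intro s hs hsS
      exact hs.2 (hkey ⟨hs.1, hsS⟩)
    refine le_antisymm ?_ (measure_mono hsub)
    calc Q (B + V) ≤ Q ((B + V) ∩ B) + Q ((B + V) \ B) :=
          measure_le_inter_add_diff _ _ _
      _ ≤ Q B + 0 := add_le_add (measure_mono Set.inter_subset_right) hdiff.le
      _ = Q B := add_zero _
end
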